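/- The function h(t) = (1/2)(α_1/(α_1 t − β_1) + α_2/(α_2 t − β_2)) satisfies the ODE h'' + 6 h h' + 4 h³ = 0 on any interval where both denominators are nonzero. -/

import Mathlib

private lemma lin_hasDerivAt (α β t : ℝ) : HasDerivAt (fun s : ℝ => α * s - β) α t := by
  simpa using ((hasDerivAt_id t).const_mul α).sub_const β

private lemma frac_hasDerivAt (α β t : ℝ) (h : α * t - β ≠ 0) :
    HasDerivAt (fun s : ℝ => α / (α * s - β)) (-(α ^ 2 / (α * t - β) ^ 2)) t := by
  have := (hasDerivAt_const t α).div (lin_hasDerivAt α β t) h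
  refine this.congr_deriv ?_
  field_simp
  ring

private lemma sq_hasDerivAt (α β t : ℝ) (h : α * t - β ≠ 0) :
    HasDerivAt (fun s : ℝ => α ^ 2 / (α * s - β) ^ 2) (-2 * (α ^ 3 / (α * t - β) ^ 3)) t := by
  have hd : HasDerivAt (fun s : ℝ => (α * s - β) ^ 2) (2 * (α * t - β) ^ 1 * α) t :=
    (lin_hasDerivAt α β t).pow 2
  have := (hasDerivAt_const t (α ^ 2)).div hd (pow_ne_zero 2 h)
  refine this.congr_deriv ?_
  field_simp
  ring

private lemma h_hasDerivAt (α₁ β₁ α₂ β₂ t : ℝ) (h1 : α₁ * t - β₁ ≠ 0) (h2 : α₂ * t - β₂ ≠ 0) :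
    HasDerivAt (fun s : ℝ => (1/2) * (α₁ / (α₁ * s - β₁) + α₂ / (α₂ * s - β₂)))
      (-(1/2) * (α₁ ^ 2 / (α₁ * t - β₁) ^ 2 + α₂ ^ 2 / (α₂ * t - β₂) ^ 2)) t := by
  have := ((frac_hasDerivAt α₁ β₁ t h1).add (frac_hasDerivAt α₂ β₂ t h2)).const_mul (1/2 : ℝ)
  refine this.congr_deriv ?_
  ring

/-- h(t) = (1/2)(α₁/(α₁t−β₁) + α₂/(α₂t−β₂)) satisfies h'' + 6hh' + 4h³ = 0
at every point where both denominators are nonzero. -/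
theorem one_ansatz_ode (α₁ β₁ α₂ β₂ : ℝ) :
    ∀ t : ℝ, α₁ * t - β₁ ≠ 0 → α₂ * t - β₂ ≠ 0 →
      deriv (deriv (fun s => (1/2) * (α₁ / (α₁ * s - β₁) + α₂ / (α₂ * s - β₂)))) t
        + 6 * ((1/2) * (α₁ / (α₁ * t - β₁) + α₂ / (α₂ * t - β₂)))
            * deriv (fun s => (1/2) * (α₁ / (α₁ * s - β₁) + α₂ / (α₂ * s - β₂))) t
        + 4 * ((1/2) * (α₁ / (α₁ * t - β₁) + α₂ / (α₂ * t - β₂)))^3 = 0 := by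
  intro t h1 h2
  set h : ℝ → ℝ := fun s => (1/2) * (α₁ / (α₁ * s - β₁) + α₂ / (α₂ * s - β₂)) with hh
  set g : ℝ → ℝ := fun s => -(1/2) * (α₁ ^ 2 / (α₁ * s - β₁) ^ 2 + α₂ ^ 2 / (α₂ * s - β₂) ^ 2)
    with hg
  -- the set where both denominators are nonzero is open and contains t
  have hopen : IsOpen {s : ℝ | α₁ * s - β₁ ≠ 0 ∧ α₂ * s - β₂ ≠ 0} := by
    apply IsOpen.inter
    · exact isOpen_ne.preimage (by continuity)
    · exact isOpen_ne.preimage (by continuity)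
  have hmem : {s : ℝ | α₁ * s - β₁ ≠ 0 ∧ α₂ * s - β₂ ≠ 0} ∈ nhds t :=
    hopen.mem_nhds ⟨h1, h2⟩
  have heq : deriv h =ᶠ[nhds t] g := by
    filter_upwards [hmem] with s hs
    exact (h_hasDerivAt α₁ β₁ α₂ β₂ s hs.1 hs.2).deriv
  have hderiv1 : deriv h t = g t := (h_hasDerivAt α₁ β₁ α₂ β₂ t h1 h2).deriv
  have hgderiv : HasDerivAt g
      (-(1/2) * (-2 * (α₁ ^ 3 / (α₁ * t - β₁) ^ 3) + -2 * (α₂ ^ 3 / (α₂ * t - β₂) ^ 3))) t := by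
    have := ((sq_hasDerivAt α₁ β₁ t h1).add (sq_hasDerivAt α₂ β₂ t h2)).const_mul (-(1/2) : ℝ)
    exact this
  have hderiv2 : deriv (deriv h) t
      = -(1/2) * (-2 * (α₁ ^ 3 / (α₁ * t - β₁) ^ 3) + -2 * (α₂ ^ 3 / (α₂ * t - β₂) ^ 3)) := by
    rw [heq.deriv_eq]
    exact hgderiv.deriv
  rw [hderiv1, hderiv2, hg]
  have h2' : t * α₂ - β₂ ≠ 0 := by rwa [mul_comm]
  field_simp
  ring
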